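/- Let H be a Hopf algebra, P a right H-comodule algebra with coinvariants B satisfying the Hopf–Galois condition, and f : H → P a convolution-invertible linear map with f(1)=1 intertwining Ad and Δ_P (i.e. (f ⊗ id)∘Ad = Δ_P∘f). Define F_f : P → P by F_f := m_P ∘ (id_P ⊗ f) ∘ Δ_P. Then F_f is a left B-module bijection satisfying F_f(1) = 1, (F_f ⊗ id_H)∘Δ_P = Δ_P∘F_f, and F_f⁻¹ = F_{f⁻¹}. -/

import Mathlib

open TensorProduct

noncomputable section

variable {H P : Type*} [Ring H] [HopfAlgebra ℂ H] [Ring P] [Algebra ℂ P]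

/-- The right adjoint coaction `Ad(g) = g⁽²⁾ ⊗ S(g⁽¹⁾)·g⁽³⁾`. -/
def adjointCoaction : H →ₗ[ℂ] H ⊗[ℂ] H :=
  (TensorProduct.map LinearMap.id (LinearMap.mul' ℂ H))
    ∘ₗ (TensorProduct.assoc ℂ H H H).toLinearMap
    ∘ₗ (TensorProduct.map
          ((TensorProduct.comm ℂ H H).toLinearMap ∘ₗ
            TensorProduct.map (HopfAlgebra.antipode (R := ℂ)) LinearMap.id)
          LinearMap.id)
    ∘ₗ (TensorProduct.map (Coalgebra.comul (R := ℂ)) LinearMap.id)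
    ∘ₗ Coalgebra.comul (R := ℂ)

/-- Convolution product of linear maps `H → P`. -/
def conv (f₁ f₂ : H →ₗ[ℂ] P) : H →ₗ[ℂ] P :=
  LinearMap.mul' ℂ P ∘ₗ TensorProduct.map f₁ f₂ ∘ₗ Coalgebra.comul (R := ℂ)

/-- The convolution unit `1·ε`. -/
def convUnit : H →ₗ[ℂ] P :=
  Algebra.linearMap ℂ P ∘ₗ Coalgebra.counit (R := ℂ)

/-- `F_f := m_P ∘ (id_P ⊗ f) ∘ Δ_P`, i.e. `F_f(x) = x⁽⁰⁾ f(x⁽¹⁾)`. -/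
def Ff (ΔP : P →ₗ[ℂ] P ⊗[ℂ] H) (f : H →ₗ[ℂ] P) : P →ₗ[ℂ] P :=
  LinearMap.mul' ℂ P ∘ₗ TensorProduct.map LinearMap.id f ∘ₗ ΔP

----------------------------------------------------------------
-- auxiliary material
namespace FfAux

local notation "SH" => HopfAlgebra.antipode (R := ℂ) (A := H)
local notation "δH" => Coalgebra.comul (R := ℂ) (A := H)
local notation "εH" => Coalgebra.counit (R := ℂ) (A := H)

lemma counit_left_repr (a : H) (r : Coalgebra.Repr ℂ a (H × H)) :
    ∑ i ∈ r.index, εH (r.left i) • r.right i = a := by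
  have h := Coalgebra.sum_counit_tmul_eq r
  apply_fun TensorProduct.lid ℂ H at h
  simp only [map_sum, lid_tmul, one_smul] at h
  exact h

lemma counit_right_repr (a : H) (r : Coalgebra.Repr ℂ a (H × H)) :
    ∑ i ∈ r.index, εH (r.right i) • r.left i = a := by
  have h := Coalgebra.sum_tmul_counit_eq r
  apply_fun TensorProduct.rid ℂ H at h
  simp only [map_sum, rid_tmul, one_smul] at h
  exact h

variable {Q : Type*} [Ring Q] [Algebra ℂ Q]

lemma conv_apply_repr (f₁ f₂ : H →ₗ[ℂ] Q) (g : H) (r : Coalgebra.Repr ℂ g (H × H)) :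
    conv f₁ f₂ g = ∑ i ∈ r.index, f₁ (r.left i) * f₂ (r.right i) := by
  simp only [conv, LinearMap.comp_apply, ← r.eq, map_sum, TensorProduct.map_tmul,
    LinearMap.mul'_apply]

lemma convUnit_apply (g : H) : (convUnit : H →ₗ[ℂ] Q) g = εH g • 1 := by
  simp [convUnit, Algebra.smul_def]

/-- `Ψ (g ⊗ (a ⊗ b)) = a ⊗ (g*b)` -/
def Ψ : H ⊗[ℂ] (H ⊗[ℂ] H) →ₗ[ℂ] H ⊗[ℂ] H :=
  (LinearMap.lTensor H (LinearMap.mul' ℂ H))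
    ∘ₗ (TensorProduct.assoc ℂ H H H).toLinearMap
    ∘ₗ (LinearMap.rTensor H (TensorProduct.comm ℂ H H).toLinearMap)
    ∘ₗ (TensorProduct.assoc ℂ H H H).symm.toLinearMap

@[simp] lemma Ψ_tmul (g a b : H) : Ψ (g ⊗ₜ[ℂ] (a ⊗ₜ[ℂ] b)) = a ⊗ₜ[ℂ] (g * b) := by
  simp [Ψ]

/-- `Ξ₃ (a ⊗ (b ⊗ c)) = b ⊗ (S a * c)` -/
def Ξ₃ : H ⊗[ℂ] (H ⊗[ℂ] H) →ₗ[ℂ] H ⊗[ℂ] H :=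
  Ψ ∘ₗ (LinearMap.rTensor (H ⊗[ℂ] H) SH)

@[simp] lemma Ξ₃_tmul (a b c : H) : Ξ₃ (a ⊗ₜ[ℂ] (b ⊗ₜ[ℂ] c)) = b ⊗ₜ[ℂ] (SH a * c) := by
  simp [Ξ₃]

/-- `ξ (y ⊗ z) = ∑ z⁽¹⁾ ⊗ (S y * z⁽²⁾)` -/
def ξ : H ⊗[ℂ] H →ₗ[ℂ] H ⊗[ℂ] H := Ξ₃ ∘ₗ (LinearMap.lTensor H δH)

lemma ξ_tmul (y z : H) (rz : Coalgebra.Repr ℂ z (H × H)) :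
    ξ (y ⊗ₜ[ℂ] z) = ∑ k ∈ rz.index, rz.left k ⊗ₜ[ℂ] (SH y * rz.right k) := by
  simp only [ξ, LinearMap.comp_apply, LinearMap.lTensor_tmul, ← rz.eq, tmul_sum, map_sum,
    Ξ₃_tmul]

/-- `Ξ₂ (x ⊗ (y ⊗ z)) = ∑ z⁽¹⁾ ⊗ x * (S y * z⁽²⁾)` -/
def Ξ₂ : H ⊗[ℂ] (H ⊗[ℂ] H) →ₗ[ℂ] H ⊗[ℂ] H := Ψ ∘ₗ (LinearMap.lTensor H ξ)

lemma Ξ₂_tmul (x y z : H) (rz : Coalgebra.Repr ℂ z (H × H)) :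
    Ξ₂ (x ⊗ₜ[ℂ] (y ⊗ₜ[ℂ] z)) =
      ∑ k ∈ rz.index, rz.left k ⊗ₜ[ℂ] (x * (SH y * rz.right k)) := by
  simp only [Ξ₂, LinearMap.comp_apply, LinearMap.lTensor_tmul, ξ_tmul y z rz, tmul_sum,
    map_sum, Ψ_tmul]


lemma ad_repr₁ (a : H) (t : Coalgebra.Repr ℂ a (H × H)) (tl : ∀ i, Coalgebra.Repr ℂ (t.left i) (H × H)) :
    adjointCoaction a = ∑ i ∈ t.index, ∑ j ∈ (tl i).index,
      (tl i).right j ⊗ₜ[ℂ] (SH ((tl i).left j) * t.right i) := by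
  simp only [adjointCoaction, LinearMap.comp_apply, ← t.eq, map_sum, TensorProduct.map_tmul,
    LinearMap.id_coe, id_eq]
  refine Finset.sum_congr rfl fun i _ => ?_
  rw [← (tl i).eq]
  simp [sum_tmul]

lemma ad_repr₂ (a : H) (t : Coalgebra.Repr ℂ a (H × H)) (tr : ∀ i, Coalgebra.Repr ℂ (t.right i) (H × H)) :
    adjointCoaction a = ∑ i ∈ t.index, ∑ j ∈ (tr i).index,
      (tr i).left j ⊗ₜ[ℂ] (SH (t.left i) * (tr i).right j) := by
  set tl : ∀ i, Coalgebra.Repr ℂ (t.left i) (H × H) := fun i => Coalgebra.Repr.arbitrary ℂ (t.left i)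
  have key := Coalgebra.sum_tmul_tmul_eq t tl tr
  apply_fun Ξ₃ (H := H) at key
  simp only [map_sum, Ξ₃_tmul] at key
  rw [ad_repr₁ a t tl]
  exact key

/-- the key Sweedler identity `∑ h⁽¹⁾ · Ad(h⁽²⁾) = Δ h` (with the first leg
multiplied into the second leg of `Ad`). -/
lemma star (h : H) (r : Coalgebra.Repr ℂ h (H × H)) :
    ∑ i ∈ r.index, Ψ (r.left i ⊗ₜ[ℂ] adjointCoaction (r.right i)) = δH h := by
  set rl : ∀ i, Coalgebra.Repr ℂ (r.left i) (H × H) := fun i => Coalgebra.Repr.arbitrary ℂ (r.left i)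
  set rr : ∀ i, Coalgebra.Repr ℂ (r.right i) (H × H) := fun i => Coalgebra.Repr.arbitrary ℂ (r.right i)
  have step1 : ∀ i ∈ r.index, Ψ (r.left i ⊗ₜ[ℂ] adjointCoaction (r.right i)) =
      ∑ j ∈ (rr i).index, Ξ₂ (r.left i ⊗ₜ[ℂ] ((rr i).left j ⊗ₜ[ℂ] (rr i).right j)) := by
    intro i _
    rw [ad_repr₂ (r.right i) (rr i) (fun j => Coalgebra.Repr.arbitrary ℂ ((rr i).right j))]
    simp only [tmul_sum, map_sum, Ψ_tmul]
    refine Finset.sum_congr rfl fun j _ => ?_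
    rw [Ξ₂_tmul _ _ _ (Coalgebra.Repr.arbitrary ℂ ((rr i).right j))]
  rw [Finset.sum_congr rfl step1]
  have key := Coalgebra.sum_tmul_tmul_eq r rl rr
  apply_fun Ξ₂ (H := H) at key
  simp only [map_sum] at key
  rw [← key]
  have step2 : ∀ i ∈ r.index, ∀ j ∈ (rl i).index,
      Ξ₂ ((rl i).left j ⊗ₜ[ℂ] ((rl i).right j ⊗ₜ[ℂ] r.right i)) =
      ∑ k ∈ (rr i).index, (rr i).left k ⊗ₜ[ℂ]
        (((rl i).left j * SH ((rl i).right j)) * (rr i).right k) := by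
    intro i _ j _
    rw [Ξ₂_tmul _ _ _ (rr i)]
    simp only [mul_assoc]
  calc ∑ i ∈ r.index, ∑ j ∈ (rl i).index,
        Ξ₂ ((rl i).left j ⊗ₜ[ℂ] ((rl i).right j ⊗ₜ[ℂ] r.right i))
      = ∑ i ∈ r.index, ∑ j ∈ (rl i).index, ∑ k ∈ (rr i).index, (rr i).left k ⊗ₜ[ℂ]
          (((rl i).left j * SH ((rl i).right j)) * (rr i).right k) := by
        refine Finset.sum_congr rfl fun i hi => Finset.sum_congr rfl fun j hj => ?_
        exact step2 i hi j hj
    _ = ∑ i ∈ r.index, ∑ k ∈ (rr i).index, (rr i).left k ⊗ₜ[ℂ]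
          ((∑ j ∈ (rl i).index, (rl i).left j * SH ((rl i).right j)) * (rr i).right k) := by
        refine Finset.sum_congr rfl fun i hi => ?_
        rw [Finset.sum_comm]
        refine Finset.sum_congr rfl fun k hk => ?_
        rw [← tmul_sum, ← Finset.sum_mul]
    _ = ∑ i ∈ r.index, εH (r.left i) •
          ∑ k ∈ (rr i).index, (rr i).left k ⊗ₜ[ℂ] (rr i).right k := by
        refine Finset.sum_congr rfl fun i hi => ?_
        rw [HopfAlgebra.sum_mul_antipode_eq_smul (rl i)]
        rw [Finset.smul_sum]
        refine Finset.sum_congr rfl fun k hk => ?_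
        rw [smul_mul_assoc, one_mul, tmul_smul]
    _ = δH h := by
        have : ∀ i ∈ r.index, εH (r.left i) •
            (∑ k ∈ (rr i).index, (rr i).left k ⊗ₜ[ℂ] (rr i).right k) =
            εH (r.left i) • δH (r.right i) := by
          intro i _; rw [(rr i).eq]
        rw [Finset.sum_congr rfl this]
        simp_rw [← map_smul]
        rw [← map_sum, counit_left_repr h r]


lemma conv_assoc (a b c : H →ₗ[ℂ] Q) : conv (conv a b) c = conv a (conv b c) := by
  ext g
  set r := Coalgebra.Repr.arbitrary ℂ g
  set rl : ∀ i, Coalgebra.Repr ℂ (r.left i) (H × H) := fun i => Coalgebra.Repr.arbitrary ℂ (r.left i)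
  set rr : ∀ i, Coalgebra.Repr ℂ (r.right i) (H × H) := fun i => Coalgebra.Repr.arbitrary ℂ (r.right i)
  have key := Coalgebra.sum_tmul_tmul_eq r rl rr
  apply_fun (LinearMap.mul' ℂ Q ∘ₗ
    TensorProduct.map a (LinearMap.mul' ℂ Q ∘ₗ TensorProduct.map b c)) at key
  simp only [map_sum, LinearMap.comp_apply, TensorProduct.map_tmul,
    LinearMap.mul'_apply] at key
  rw [conv_apply_repr (conv a b) c g r, conv_apply_repr a (conv b c) g r]
  calc ∑ i ∈ r.index, conv a b (r.left i) * c (r.right i)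
      = ∑ i ∈ r.index, ∑ j ∈ (rl i).index,
          a ((rl i).left j) * (b ((rl i).right j) * c (r.right i)) := by
        refine Finset.sum_congr rfl fun i _ => ?_
        rw [conv_apply_repr a b (r.left i) (rl i), Finset.sum_mul]
        simp_rw [mul_assoc]
    _ = ∑ i ∈ r.index, ∑ j ∈ (rr i).index,
          a (r.left i) * (b ((rr i).left j) * c ((rr i).right j)) := key
    _ = ∑ i ∈ r.index, a (r.left i) * conv b c (r.right i) := by
        refine Finset.sum_congr rfl fun i _ => ?_
        rw [conv_apply_repr b c (r.right i) (rr i), Finset.mul_sum]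

lemma conv_unit_left (a : H →ₗ[ℂ] Q) : conv convUnit a = a := by
  ext g
  set r := Coalgebra.Repr.arbitrary ℂ g
  rw [conv_apply_repr convUnit a g r]
  simp_rw [convUnit_apply, smul_mul_assoc, one_mul, ← map_smul]
  rw [← map_sum, counit_left_repr g r]

lemma conv_unit_right (a : H →ₗ[ℂ] Q) : conv a convUnit = a := by
  ext g
  set r := Coalgebra.Repr.arbitrary ℂ g
  rw [conv_apply_repr a convUnit g r]
  simp_rw [convUnit_apply, mul_smul_comm, mul_one, ← map_smul]
  rw [← map_sum, counit_right_repr g r]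

variable {Q' : Type*} [Ring Q'] [Algebra ℂ Q']

lemma comp_conv (α : Q →ₗ[ℂ] Q') (hα : ∀ x y : Q, α (x * y) = α x * α y)
    (a b : H →ₗ[ℂ] Q) : α ∘ₗ conv a b = conv (α ∘ₗ a) (α ∘ₗ b) := by
  ext g
  set r := Coalgebra.Repr.arbitrary ℂ g
  rw [LinearMap.comp_apply, conv_apply_repr a b g r,
    conv_apply_repr (α ∘ₗ a) (α ∘ₗ b) g r, map_sum]
  exact Finset.sum_congr rfl fun i _ => hα _ _

lemma comp_convUnit (α : Q →ₗ[ℂ] Q') (hα1 : α 1 = 1) :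
    α ∘ₗ (convUnit : H →ₗ[ℂ] Q) = convUnit := by
  ext g
  rw [LinearMap.comp_apply, convUnit_apply, convUnit_apply, map_smul, hα1]


/-- `Nmap φ b = ∑ φ(b⁽²⁾) ⊗ S(b⁽¹⁾)` -/
def Nmap (φ : H →ₗ[ℂ] P) : H →ₗ[ℂ] P ⊗[ℂ] H :=
  (TensorProduct.map φ SH) ∘ₗ (TensorProduct.comm ℂ H H).toLinearMap ∘ₗ δH

lemma Nmap_apply (φ : H →ₗ[ℂ] P) (b : H) (rb : Coalgebra.Repr ℂ b (H × H)) :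
    Nmap φ b = ∑ k ∈ rb.index, φ (rb.right k) ⊗ₜ[ℂ] SH (rb.left k) := by
  simp only [Nmap, LinearMap.comp_apply, ← rb.eq, map_sum, LinearEquiv.coe_coe, comm_tmul,
    TensorProduct.map_tmul]

/-- `Tmap φ = (φ ⊗ id) ∘ Ad` -/
def Tmap (φ : H →ₗ[ℂ] P) : H →ₗ[ℂ] P ⊗[ℂ] H :=
  (TensorProduct.map φ LinearMap.id) ∘ₗ adjointCoaction

lemma Tmap_apply (φ : H →ₗ[ℂ] P) (a : H) (t : Coalgebra.Repr ℂ a (H × H))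
    (tl : ∀ i, Coalgebra.Repr ℂ (t.left i) (H × H)) :
    Tmap φ a = ∑ i ∈ t.index, ∑ j ∈ (tl i).index,
      φ ((tl i).right j) ⊗ₜ[ℂ] (SH ((tl i).left j) * t.right i) := by
  simp only [Tmap, LinearMap.comp_apply, ad_repr₁ a t tl, map_sum, TensorProduct.map_tmul,
    LinearMap.id_coe, id_eq]

/-- decomposing `Tmap φ a = ∑ Nmap φ (a⁽¹⁾) * (1 ⊗ a⁽²⁾)` -/
lemma Tmap_decomp (φ : H →ₗ[ℂ] P) (a : H) (t : Coalgebra.Repr ℂ a (H × H)) :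
    Tmap φ a = ∑ i ∈ t.index, Nmap φ (t.left i) * ((1 : P) ⊗ₜ[ℂ] t.right i) := by
  set tl : ∀ i, Coalgebra.Repr ℂ (t.left i) (H × H) := fun i => Coalgebra.Repr.arbitrary ℂ (t.left i)
  rw [Tmap_apply φ a t tl]
  refine Finset.sum_congr rfl fun i _ => ?_
  rw [Nmap_apply φ (t.left i) (tl i), Finset.sum_mul]
  refine Finset.sum_congr rfl fun j _ => ?_
  rw [Algebra.TensorProduct.tmul_mul_tmul, mul_one]

/-- `Kmap f finv l = ∑ Tmap f (l⁽¹⁾) * Nmap finv (l⁽²⁾)` -/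
def Kmap (f finv : H →ₗ[ℂ] P) : H →ₗ[ℂ] P ⊗[ℂ] H :=
  LinearMap.mul' ℂ (P ⊗[ℂ] H) ∘ₗ TensorProduct.map (Tmap f) (Nmap finv) ∘ₗ δH

lemma Kmap_apply (f finv : H →ₗ[ℂ] P) (l : H) (s : Coalgebra.Repr ℂ l (H × H)) :
    Kmap f finv l = ∑ i ∈ s.index, Tmap f (s.left i) * Nmap finv (s.right i) := by
  simp only [Kmap, LinearMap.comp_apply, ← s.eq, map_sum, TensorProduct.map_tmul,
    LinearMap.mul'_apply]

/-- `Gmap finv x = ∑ (1 ⊗ x⁽¹⁾) * Nmap finv (x⁽²⁾)` -/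
def Gmap (finv : H →ₗ[ℂ] P) : H →ₗ[ℂ] P ⊗[ℂ] H :=
  LinearMap.mul' ℂ (P ⊗[ℂ] H) ∘ₗ
    TensorProduct.map ((TensorProduct.mk ℂ P H) 1) (Nmap finv) ∘ₗ δH

lemma Gmap_apply (finv : H →ₗ[ℂ] P) (x : H) (t : Coalgebra.Repr ℂ x (H × H)) :
    Gmap finv x = ∑ i ∈ t.index, ((1 : P) ⊗ₜ[ℂ] t.left i) * Nmap finv (t.right i) := by
  simp only [Gmap, LinearMap.comp_apply, ← t.eq, map_sum, TensorProduct.map_tmul,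
    LinearMap.mul'_apply, mk_apply]

lemma Gmap_eq (finv : H →ₗ[ℂ] P) (x : H) : Gmap finv x = finv x ⊗ₜ[ℂ] (1 : H) := by
  set t := Coalgebra.Repr.arbitrary ℂ x
  set tl : ∀ i, Coalgebra.Repr ℂ (t.left i) (H × H) := fun i => Coalgebra.Repr.arbitrary ℂ (t.left i)
  set tr : ∀ i, Coalgebra.Repr ℂ (t.right i) (H × H) := fun i => Coalgebra.Repr.arbitrary ℂ (t.right i)
  have e1 : Gmap finv x = ∑ i ∈ t.index, ∑ j ∈ (tr i).index,
      finv ((tr i).right j) ⊗ₜ[ℂ] (t.left i * SH ((tr i).left j)) := by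
    rw [Gmap_apply finv x t]
    refine Finset.sum_congr rfl fun i _ => ?_
    rw [Nmap_apply finv (t.right i) (tr i), Finset.mul_sum]
    refine Finset.sum_congr rfl fun j _ => ?_
    rw [Algebra.TensorProduct.tmul_mul_tmul, one_mul]
  -- the pure contraction map  a ⊗ (b ⊗ c) ↦ finv c ⊗ (a * S b)
  set Φ₂ : H ⊗[ℂ] (H ⊗[ℂ] H) →ₗ[ℂ] P ⊗[ℂ] H :=
    (TensorProduct.map finv LinearMap.id) ∘ₗ Ψ ∘ₗ
      (LinearMap.lTensor H ((LinearMap.lTensor H SH) ∘ₗ (TensorProduct.comm ℂ H H).toLinearMap))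
    with hΦ₂
  have Φ₂_tmul : ∀ a b c : H, Φ₂ (a ⊗ₜ[ℂ] (b ⊗ₜ[ℂ] c)) = finv c ⊗ₜ[ℂ] (a * SH b) := by
    intro a b c
    simp [hΦ₂]
  have key := Coalgebra.sum_tmul_tmul_eq t tl tr
  apply_fun Φ₂ at key
  simp only [map_sum, Φ₂_tmul] at key
  rw [e1, ← key]
  calc ∑ i ∈ t.index, ∑ j ∈ (tl i).index,
        finv (t.right i) ⊗ₜ[ℂ] ((tl i).left j * SH ((tl i).right j))
      = ∑ i ∈ t.index, finv (t.right i) ⊗ₜ[ℂ]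
          (∑ j ∈ (tl i).index, (tl i).left j * SH ((tl i).right j)) := by
        refine Finset.sum_congr rfl fun i _ => ?_
        rw [tmul_sum]
    _ = ∑ i ∈ t.index, εH (t.left i) • (finv (t.right i) ⊗ₜ[ℂ] (1 : H)) := by
        refine Finset.sum_congr rfl fun i _ => ?_
        rw [HopfAlgebra.sum_mul_antipode_eq_smul (tl i), tmul_smul]
    _ = finv x ⊗ₜ[ℂ] (1 : H) := by
        simp_rw [smul_tmul', ← map_smul]
        rw [← sum_tmul, ← map_sum, counit_left_repr x t]

lemma Kmap_eq (f finv : H →ₗ[ℂ] P) (hinv₁ : conv f finv = convUnit) (l : H) :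
    Kmap f finv l = (1 : P) ⊗ₜ[ℂ] SH l := by
  set s := Coalgebra.Repr.arbitrary ℂ l
  set sl : ∀ i, Coalgebra.Repr ℂ (s.left i) (H × H) := fun i => Coalgebra.Repr.arbitrary ℂ (s.left i)
  set sr : ∀ i, Coalgebra.Repr ℂ (s.right i) (H × H) := fun i => Coalgebra.Repr.arbitrary ℂ (s.right i)
  have key := Coalgebra.sum_tmul_tmul_eq s sl sr
  -- χ (a ⊗ (b ⊗ c)) = Nmap f a * ((1 ⊗ b) * Nmap finv c)
  set χ : H ⊗[ℂ] (H ⊗[ℂ] H) →ₗ[ℂ] P ⊗[ℂ] H :=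
    LinearMap.mul' ℂ (P ⊗[ℂ] H) ∘ₗ TensorProduct.map (Nmap f)
      (LinearMap.mul' ℂ (P ⊗[ℂ] H) ∘ₗ
        TensorProduct.map ((TensorProduct.mk ℂ P H) 1) (Nmap finv)) with hχ
  have χ_tmul : ∀ a b c : H, χ (a ⊗ₜ[ℂ] (b ⊗ₜ[ℂ] c)) =
      Nmap f a * (((1 : P) ⊗ₜ[ℂ] b) * Nmap finv c) := by
    intro a b c; simp [hχ]
  have key1 := key
  apply_fun χ at key1
  simp only [map_sum, χ_tmul] at key1
  have e2 : Kmap f finv l = ∑ i ∈ s.index, ∑ j ∈ (sl i).index,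
      Nmap f ((sl i).left j) * (((1 : P) ⊗ₜ[ℂ] (sl i).right j) * Nmap finv (s.right i)) := by
    rw [Kmap_apply f finv l s]
    refine Finset.sum_congr rfl fun i _ => ?_
    rw [Tmap_decomp f (s.left i) (sl i), Finset.sum_mul]
    simp_rw [mul_assoc]
  have e3 : Kmap f finv l =
      ∑ i ∈ s.index, Nmap f (s.left i) * (finv (s.right i) ⊗ₜ[ℂ] (1 : H)) := by
    rw [e2, key1]
    refine Finset.sum_congr rfl fun i _ => ?_
    rw [← Gmap_eq finv (s.right i), Gmap_apply finv (s.right i) (sr i), Finset.mul_sum]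
  -- now regroup using Φ₃ (a ⊗ (b ⊗ c)) = (f b * finv c) ⊗ S a
  set Φ₃ : H ⊗[ℂ] (H ⊗[ℂ] H) →ₗ[ℂ] P ⊗[ℂ] H :=
    (TensorProduct.comm ℂ H P).toLinearMap ∘ₗ
      (LinearMap.lTensor H (LinearMap.mul' ℂ P ∘ₗ TensorProduct.map f finv)) ∘ₗ
      (LinearMap.rTensor (H ⊗[ℂ] H) SH) with hΦ₃
  have Φ₃_tmul : ∀ a b c : H, Φ₃ (a ⊗ₜ[ℂ] (b ⊗ₜ[ℂ] c)) =
      (f b * finv c) ⊗ₜ[ℂ] SH a := by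
    intro a b c; simp [hΦ₃]
  have key2 := key
  apply_fun Φ₃ at key2
  simp only [map_sum, Φ₃_tmul] at key2
  have e4 : Kmap f finv l = ∑ i ∈ s.index, ∑ j ∈ (sl i).index,
      (f ((sl i).right j) * finv (s.right i)) ⊗ₜ[ℂ] SH ((sl i).left j) := by
    rw [e3]
    refine Finset.sum_congr rfl fun i _ => ?_
    rw [Nmap_apply f (s.left i) (sl i), Finset.sum_mul]
    refine Finset.sum_congr rfl fun j _ => ?_
    rw [Algebra.TensorProduct.tmul_mul_tmul, mul_one]
  rw [e4, key2]
  calc ∑ i ∈ s.index, ∑ j ∈ (sr i).index,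
        (f ((sr i).left j) * finv ((sr i).right j)) ⊗ₜ[ℂ] SH (s.left i)
      = ∑ i ∈ s.index, (conv f finv (s.right i)) ⊗ₜ[ℂ] SH (s.left i) := by
        refine Finset.sum_congr rfl fun i _ => ?_
        rw [conv_apply_repr f finv (s.right i) (sr i), sum_tmul]
    _ = ∑ i ∈ s.index, εH (s.right i) • ((1 : P) ⊗ₜ[ℂ] SH (s.left i)) := by
        refine Finset.sum_congr rfl fun i _ => ?_
        rw [hinv₁, convUnit_apply, smul_tmul']
    _ = (1 : P) ⊗ₜ[ℂ] SH l := by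
        simp_rw [← tmul_smul, ← map_smul]
        rw [← tmul_sum, ← map_sum, counit_right_repr l s]

/-- `R₀ (b ⊗ c) = ∑ b⁽²⁾ ⊗ (S b⁽¹⁾ * c)` -/
def R₀ : H ⊗[ℂ] H →ₗ[ℂ] H ⊗[ℂ] H :=
  Ξ₃ ∘ₗ (TensorProduct.assoc ℂ H H H).toLinearMap ∘ₗ (LinearMap.rTensor H δH)

lemma R₀_tmul (b c : H) (rb : Coalgebra.Repr ℂ b (H × H)) :
    R₀ (b ⊗ₜ[ℂ] c) = ∑ k ∈ rb.index, rb.right k ⊗ₜ[ℂ] (SH (rb.left k) * c) := by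
  simp only [R₀, LinearMap.comp_apply, LinearMap.rTensor_tmul, ← rb.eq, sum_tmul, map_sum,
    LinearEquiv.coe_coe, assoc_tmul, Ξ₃_tmul]

/-- `W₀ (a ⊗ (b ⊗ c)) = Tmap f a * ∑ (finv b⁽²⁾ ⊗ S b⁽¹⁾ c)` -/
def W₀ (f finv : H →ₗ[ℂ] P) : H ⊗[ℂ] (H ⊗[ℂ] H) →ₗ[ℂ] P ⊗[ℂ] H :=
  LinearMap.mul' ℂ (P ⊗[ℂ] H) ∘ₗ
    TensorProduct.map (Tmap f) ((TensorProduct.map finv LinearMap.id) ∘ₗ R₀)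

lemma W₀_tmul (f finv : H →ₗ[ℂ] P) (a b c : H) (rb : Coalgebra.Repr ℂ b (H × H)) :
    W₀ f finv (a ⊗ₜ[ℂ] (b ⊗ₜ[ℂ] c)) = ∑ k ∈ rb.index,
      Tmap f a * (finv (rb.right k) ⊗ₜ[ℂ] (SH (rb.left k) * c)) := by
  simp only [W₀, LinearMap.comp_apply, TensorProduct.map_tmul, R₀_tmul b c rb, map_sum,
    TensorProduct.map_tmul, LinearMap.id_coe, id_eq, LinearMap.mul'_apply, tmul_sum,
    Finset.mul_sum]

/-- the crucial convolution identity: `(Δ_P ∘ f) ∗ ((finv ⊗ id) ∘ Ad) = 1·ε`. -/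
lemma conv_main (ΔP : P →ₗ[ℂ] P ⊗[ℂ] H) (f finv : H →ₗ[ℂ] P)
    (hequiv : ∀ g : H, (TensorProduct.map f LinearMap.id) (adjointCoaction g) = ΔP (f g))
    (hinv₁ : conv f finv = convUnit) :
    conv (ΔP ∘ₗ f) ((TensorProduct.map finv LinearMap.id) ∘ₗ adjointCoaction) = convUnit := by
  ext g
  set r := Coalgebra.Repr.arbitrary ℂ g
  set rl : ∀ i, Coalgebra.Repr ℂ (r.left i) (H × H) := fun i => Coalgebra.Repr.arbitrary ℂ (r.left i)
  set rr : ∀ i, Coalgebra.Repr ℂ (r.right i) (H × H) := fun i => Coalgebra.Repr.arbitrary ℂ (r.right i)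
  rw [conv_apply_repr _ _ g r]
  have stepa : ∀ i ∈ r.index,
      (ΔP ∘ₗ f) (r.left i) *
        ((TensorProduct.map finv LinearMap.id) ∘ₗ adjointCoaction) (r.right i) =
      ∑ j ∈ (rr i).index,
        W₀ f finv (r.left i ⊗ₜ[ℂ] ((rr i).left j ⊗ₜ[ℂ] (rr i).right j)) := by
    intro i _
    have h1 : (ΔP ∘ₗ f) (r.left i) = Tmap f (r.left i) := by
      rw [LinearMap.comp_apply, ← hequiv (r.left i)]; rfl
    rw [h1, LinearMap.comp_apply,
      ad_repr₁ (r.right i) (rr i) (fun j => Coalgebra.Repr.arbitrary ℂ ((rr i).left j))]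
    simp only [map_sum, TensorProduct.map_tmul, LinearMap.id_coe, id_eq, Finset.mul_sum]
    refine Finset.sum_congr rfl fun j _ => ?_
    rw [W₀_tmul f finv _ _ _ (Coalgebra.Repr.arbitrary ℂ ((rr i).left j))]
  rw [Finset.sum_congr rfl stepa]
  have key := Coalgebra.sum_tmul_tmul_eq r rl rr
  apply_fun W₀ f finv at key
  simp only [map_sum] at key
  rw [← key]
  have stepc : ∀ i ∈ r.index, ∀ j ∈ (rl i).index,
      W₀ f finv ((rl i).left j ⊗ₜ[ℂ] ((rl i).right j ⊗ₜ[ℂ] r.right i)) =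
      (Tmap f ((rl i).left j) * Nmap finv ((rl i).right j)) * ((1 : P) ⊗ₜ[ℂ] r.right i) := by
    intro i _ j _
    rw [W₀_tmul f finv _ _ _ (Coalgebra.Repr.arbitrary ℂ ((rl i).right j)),
      Nmap_apply finv ((rl i).right j) (Coalgebra.Repr.arbitrary ℂ ((rl i).right j)),
      Finset.mul_sum, Finset.sum_mul]
    refine Finset.sum_congr rfl fun k _ => ?_
    rw [mul_assoc, Algebra.TensorProduct.tmul_mul_tmul, mul_one]
  calc ∑ i ∈ r.index, ∑ j ∈ (rl i).index,
        W₀ f finv ((rl i).left j ⊗ₜ[ℂ] ((rl i).right j ⊗ₜ[ℂ] r.right i))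
      = ∑ i ∈ r.index, Kmap f finv (r.left i) * ((1 : P) ⊗ₜ[ℂ] r.right i) := by
        refine Finset.sum_congr rfl fun i hi => ?_
        rw [Finset.sum_congr rfl (stepc i hi), ← Finset.sum_mul,
          ← Kmap_apply f finv (r.left i) (rl i)]
    _ = (1 : P) ⊗ₜ[ℂ] (∑ i ∈ r.index, SH (r.left i) * r.right i) := by
        rw [tmul_sum]
        refine Finset.sum_congr rfl fun i _ => ?_
        rw [Kmap_eq f finv hinv₁, Algebra.TensorProduct.tmul_mul_tmul, one_mul]
    _ = convUnit g := by
        rw [HopfAlgebra.sum_antipode_mul_eq_algebraMap_counit r, convUnit_apply,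
          Algebra.algebraMap_eq_smul_one, tmul_smul, Algebra.TensorProduct.one_def]

/-- equivariance of the convolution inverse. -/
lemma equiv_inv (ΔP : P →ₗ[ℂ] P ⊗[ℂ] H) (f finv : H →ₗ[ℂ] P)
    (hPmul : ∀ x y : P, ΔP (x * y) = ΔP x * ΔP y) (hPone : ΔP 1 = 1)
    (hequiv : ∀ g : H, (TensorProduct.map f LinearMap.id) (adjointCoaction g) = ΔP (f g))
    (hinv₁ : conv f finv = convUnit) (hinv₂ : conv finv f = convUnit) :
    ∀ g : H, (TensorProduct.map finv LinearMap.id) (adjointCoaction g) = ΔP (finv g) := by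
  set u := ΔP ∘ₗ f
  set v := (TensorProduct.map finv LinearMap.id) ∘ₗ adjointCoaction (H := H) with hv
  set vt := ΔP ∘ₗ finv with hvt
  have h1 : conv u v = convUnit := conv_main ΔP f finv hequiv hinv₁
  have h2 : conv vt u = convUnit := by
    rw [hvt, show u = ΔP ∘ₗ f from rfl, ← comp_conv ΔP hPmul finv f, hinv₂,
      comp_convUnit ΔP hPone]
  have hveq : vt = v := by
    calc vt = conv vt convUnit := (conv_unit_right vt).symm
      _ = conv vt (conv u v) := by rw [h1]
      _ = conv (conv vt u) v := (conv_assoc vt u v).symm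
      _ = conv convUnit v := by rw [h2]
      _ = v := conv_unit_left v
  intro g
  have h3 := LinearMap.congr_fun hveq g
  rw [hvt, LinearMap.comp_apply] at h3
  exact h3.symm

lemma Ff_one (ΔP : P →ₗ[ℂ] P ⊗[ℂ] H) (f : H →ₗ[ℂ] P) (hPone : ΔP 1 = 1)
    (hf1 : f 1 = 1) : Ff ΔP f 1 = 1 := by
  simp [Ff, hPone, Algebra.TensorProduct.one_def, hf1]

lemma Ff_bmul (ΔP : P →ₗ[ℂ] P ⊗[ℂ] H) (f : H →ₗ[ℂ] P)
    (hPmul : ∀ x y : P, ΔP (x * y) = ΔP x * ΔP y)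
    (b : P) (hb : ΔP b = b ⊗ₜ[ℂ] 1) (x : P) :
    Ff ΔP f (b * x) = b * Ff ΔP f x := by
  have aux : ∀ t : P ⊗[ℂ] H,
      LinearMap.mul' ℂ P ((TensorProduct.map LinearMap.id f) ((b ⊗ₜ[ℂ] (1 : H)) * t)) =
      b * LinearMap.mul' ℂ P ((TensorProduct.map LinearMap.id f) t) := by
    intro t
    induction t using TensorProduct.induction_on with
    | zero => simp
    | tmul p h =>
        simp only [Algebra.TensorProduct.tmul_mul_tmul, one_mul, TensorProduct.map_tmul,
          LinearMap.mul'_apply, LinearMap.id_coe, id_eq, mul_assoc]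
    | add s t hs ht => simp only [mul_add, map_add, hs, ht]
  simp only [Ff, LinearMap.comp_apply, hPmul b x, hb]
  exact aux (ΔP x)

lemma Ff_equiv (ΔP : P →ₗ[ℂ] P ⊗[ℂ] H)
    (hPmul : ∀ x y : P, ΔP (x * y) = ΔP x * ΔP y)
    (hcoassoc : ∀ x : P,
      (TensorProduct.assoc ℂ P H H)
        ((TensorProduct.map ΔP LinearMap.id) (ΔP x)) =
      (TensorProduct.map LinearMap.id (Coalgebra.comul (R := ℂ))) (ΔP x))
    (φ : H →ₗ[ℂ] P)
    (hφ : ∀ g : H, (TensorProduct.map φ LinearMap.id) (adjointCoaction g) = ΔP (φ g))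
    (x : P) :
    (TensorProduct.map (Ff ΔP φ) LinearMap.id) (ΔP x) = ΔP (Ff ΔP φ x) := by
  have lemA : ∀ t : P ⊗[ℂ] H,
      ΔP (LinearMap.mul' ℂ P ((TensorProduct.map LinearMap.id φ) t)) =
      LinearMap.mul' ℂ (P ⊗[ℂ] H) ((TensorProduct.map ΔP (Tmap φ)) t) := by
    intro t
    induction t using TensorProduct.induction_on with
    | zero => simp
    | tmul p h =>
        simp only [TensorProduct.map_tmul, LinearMap.mul'_apply, LinearMap.id_coe, id_eq]
        rw [hPmul, Tmap, LinearMap.comp_apply, hφ]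
    | add s t hs ht => simp only [map_add, hs, ht]
  have claim1 : ∀ t : P ⊗[ℂ] H, (TensorProduct.map (Ff ΔP φ) LinearMap.id) t =
      (TensorProduct.map (LinearMap.mul' ℂ P ∘ₗ TensorProduct.map LinearMap.id φ)
        LinearMap.id) ((TensorProduct.map ΔP LinearMap.id) t) := by
    intro t
    induction t using TensorProduct.induction_on with
    | zero => simp
    | tmul p h => simp [Ff]
    | add s t hs ht => simp only [map_add, hs, ht]
  have claim2 : ∀ t : P ⊗[ℂ] H,
      LinearMap.mul' ℂ (P ⊗[ℂ] H) ((TensorProduct.map ΔP (Tmap φ)) t) =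
      LinearMap.mul' ℂ (P ⊗[ℂ] H) ((TensorProduct.map LinearMap.id (Tmap φ))
        ((TensorProduct.map ΔP LinearMap.id) t)) := by
    intro t
    induction t using TensorProduct.induction_on with
    | zero => simp
    | tmul p h => simp
    | add s t hs ht => simp only [map_add, hs, ht]
  set Asym : P ⊗[ℂ] (H ⊗[ℂ] H) →ₗ[ℂ] (P ⊗[ℂ] H) ⊗[ℂ] H :=
    (TensorProduct.assoc ℂ P H H).symm.toLinearMap with hAsym
  have hco : (TensorProduct.map ΔP LinearMap.id) (ΔP x) =
      Asym ((TensorProduct.map LinearMap.id (Coalgebra.comul (R := ℂ))) (ΔP x)) := by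
    rw [hAsym, ← hcoassoc x]
    simp only [LinearEquiv.coe_coe, LinearEquiv.symm_apply_apply]
  have claim3 : ∀ t : P ⊗[ℂ] H,
      (TensorProduct.map (LinearMap.mul' ℂ P ∘ₗ TensorProduct.map LinearMap.id φ)
        LinearMap.id) (Asym
          ((TensorProduct.map LinearMap.id (Coalgebra.comul (R := ℂ))) t)) =
      LinearMap.mul' ℂ (P ⊗[ℂ] H) ((TensorProduct.map LinearMap.id (Tmap φ))
        (Asym
          ((TensorProduct.map LinearMap.id (Coalgebra.comul (R := ℂ))) t))) := by
    intro t
    induction t using TensorProduct.induction_on with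
    | zero => simp
    | tmul p h =>
        set r := Coalgebra.Repr.arbitrary ℂ h
        have hr : (Coalgebra.comul (R := ℂ)) h = ∑ i ∈ r.index, r.left i ⊗ₜ[ℂ] r.right i :=
          r.eq.symm
        simp only [TensorProduct.map_tmul, LinearMap.id_coe, id_eq, hr, tmul_sum, map_sum,
          hAsym, LinearEquiv.coe_coe, assoc_symm_tmul, LinearMap.mul'_apply,
          LinearMap.comp_apply]
        -- goal: ∑ (p * φ lᵢ) ⊗ rᵢ = ∑ (p ⊗ lᵢ) * Tmap φ rᵢ
        set θ : H ⊗[ℂ] H →ₗ[ℂ] P ⊗[ℂ] H :=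
          TensorProduct.map (LinearMap.mulLeft ℂ p ∘ₗ φ) LinearMap.id with hθ
        have bk : ∀ (g : H) (w : H ⊗[ℂ] H), θ (Ψ (g ⊗ₜ[ℂ] w)) =
            (p ⊗ₜ[ℂ] g) * (TensorProduct.map φ LinearMap.id) w := by
          intro g w
          induction w using TensorProduct.induction_on with
          | zero => simp
          | tmul a b' =>
              simp [hθ, Algebra.TensorProduct.tmul_mul_tmul, LinearMap.mulLeft_apply]
          | add s t hs ht => simp only [tmul_add, map_add, mul_add, hs, ht]
        have hstar := star h r
        apply_fun θ at hstar
        rw [map_sum] at hstar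
        calc ∑ i ∈ r.index, (p * φ (r.left i)) ⊗ₜ[ℂ] r.right i
            = θ ((Coalgebra.comul (R := ℂ)) h) := by
              rw [hr, map_sum]
              exact Finset.sum_congr rfl fun i _ => by
                simp [hθ, LinearMap.mulLeft_apply]
          _ = ∑ i ∈ r.index, θ (Ψ (r.left i ⊗ₜ[ℂ] adjointCoaction (r.right i))) :=
              hstar.symm
          _ = ∑ i ∈ r.index, (p ⊗ₜ[ℂ] r.left i) * Tmap φ (r.right i) := by
              exact Finset.sum_congr rfl fun i _ => bk (r.left i) (adjointCoaction (r.right i))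
    | add s t hs ht => simp only [map_add, hs, ht]
  calc (TensorProduct.map (Ff ΔP φ) LinearMap.id) (ΔP x)
      = (TensorProduct.map (LinearMap.mul' ℂ P ∘ₗ TensorProduct.map LinearMap.id φ)
          LinearMap.id) ((TensorProduct.map ΔP LinearMap.id) (ΔP x)) := claim1 (ΔP x)
    _ = LinearMap.mul' ℂ (P ⊗[ℂ] H) ((TensorProduct.map LinearMap.id (Tmap φ))
          ((TensorProduct.map ΔP LinearMap.id) (ΔP x))) := by
        rw [hco]; exact claim3 (ΔP x)
    _ = LinearMap.mul' ℂ (P ⊗[ℂ] H) ((TensorProduct.map ΔP (Tmap φ)) (ΔP x)) :=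
        (claim2 (ΔP x)).symm
    _ = ΔP (Ff ΔP φ x) := by
        rw [← lemA (ΔP x)]; rfl

lemma main_inv (ΔP : P →ₗ[ℂ] P ⊗[ℂ] H)
    (hPmul : ∀ x y : P, ΔP (x * y) = ΔP x * ΔP y)
    (hcounit : ∀ x : P,
      (TensorProduct.rid ℂ P)
        ((TensorProduct.map LinearMap.id (Coalgebra.counit (R := ℂ))) (ΔP x)) = x)
    (hcoassoc : ∀ x : P,
      (TensorProduct.assoc ℂ P H H)
        ((TensorProduct.map ΔP LinearMap.id) (ΔP x)) =
      (TensorProduct.map LinearMap.id (Coalgebra.comul (R := ℂ))) (ΔP x))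
    (φ ψ : H →ₗ[ℂ] P)
    (hφ : ∀ g : H, (TensorProduct.map φ LinearMap.id) (adjointCoaction g) = ΔP (φ g))
    (hconv : conv φ ψ = convUnit) (x : P) :
    Ff ΔP ψ (Ff ΔP φ x) = x := by
  set Asym : P ⊗[ℂ] (H ⊗[ℂ] H) →ₗ[ℂ] (P ⊗[ℂ] H) ⊗[ℂ] H :=
    (TensorProduct.assoc ℂ P H H).symm.toLinearMap with hAsym
  set D : (P ⊗[ℂ] H) ⊗[ℂ] H →ₗ[ℂ] P :=
    LinearMap.mul' ℂ P ∘ₗ TensorProduct.map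
      (LinearMap.mul' ℂ P ∘ₗ TensorProduct.map LinearMap.id φ) ψ with hD
  have claimD : ∀ t : P ⊗[ℂ] H,
      LinearMap.mul' ℂ P ((TensorProduct.map LinearMap.id ψ)
        ((TensorProduct.map (Ff ΔP φ) LinearMap.id) t)) =
      D ((TensorProduct.map ΔP LinearMap.id) t) := by
    intro t
    induction t using TensorProduct.induction_on with
    | zero => simp
    | tmul p h => simp [hD, Ff]
    | add s t hs ht => simp only [map_add, hs, ht]
  have hco : (TensorProduct.map ΔP LinearMap.id) (ΔP x) =
      Asym ((TensorProduct.map LinearMap.id (Coalgebra.comul (R := ℂ))) (ΔP x)) := by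
    rw [hAsym, ← hcoassoc x]
    simp only [LinearEquiv.coe_coe, LinearEquiv.symm_apply_apply]
  have claimE : ∀ t : P ⊗[ℂ] H,
      D (Asym ((TensorProduct.map LinearMap.id (Coalgebra.comul (R := ℂ))) t)) =
      LinearMap.mul' ℂ P ((TensorProduct.map LinearMap.id (conv φ ψ)) t) := by
    intro t
    induction t using TensorProduct.induction_on with
    | zero => simp
    | tmul p h =>
        set r := Coalgebra.Repr.arbitrary ℂ h
        have hr : (Coalgebra.comul (R := ℂ)) h = ∑ i ∈ r.index, r.left i ⊗ₜ[ℂ] r.right i :=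
          r.eq.symm
        simp only [TensorProduct.map_tmul, LinearMap.id_coe, id_eq, hr, tmul_sum, map_sum,
          hAsym, LinearEquiv.coe_coe, assoc_symm_tmul, hD, LinearMap.comp_apply,
          LinearMap.mul'_apply]
        rw [conv_apply_repr φ ψ h r, Finset.mul_sum]
        exact Finset.sum_congr rfl fun i _ => by rw [mul_assoc]
    | add s t hs ht => simp only [map_add, hs, ht]
  have claimF : ∀ t : P ⊗[ℂ] H,
      LinearMap.mul' ℂ P ((TensorProduct.map LinearMap.id (convUnit : H →ₗ[ℂ] P)) t) =
      (TensorProduct.rid ℂ P)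
        ((TensorProduct.map LinearMap.id (Coalgebra.counit (R := ℂ))) t) := by
    intro t
    induction t using TensorProduct.induction_on with
    | zero => simp
    | tmul p h =>
        simp only [TensorProduct.map_tmul, LinearMap.id_coe, id_eq, LinearMap.mul'_apply,
          convUnit_apply, rid_tmul, mul_smul_comm, mul_one]
    | add s t hs ht => simp only [map_add, hs, ht]
  calc Ff ΔP ψ (Ff ΔP φ x)
      = LinearMap.mul' ℂ P ((TensorProduct.map LinearMap.id ψ)
          ((TensorProduct.map (Ff ΔP φ) LinearMap.id) (ΔP x))) := by
        rw [Ff_equiv ΔP hPmul hcoassoc φ hφ x]; rfl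
    _ = D ((TensorProduct.map ΔP LinearMap.id) (ΔP x)) := claimD (ΔP x)
    _ = LinearMap.mul' ℂ P ((TensorProduct.map LinearMap.id (conv φ ψ)) (ΔP x)) := by
        rw [hco]; exact claimE (ΔP x)
    _ = x := by rw [hconv, claimF (ΔP x), hcounit x]

end FfAux

/-- let `P` be a right `H`-comodule algebra with coinvariants `B`
satisfying the Hopf–Galois condition, and let `f : H → P` be convolution invertible
with `f(1) = 1` and `(f ⊗ id)∘Ad = Δ_P∘f`. Then `F_f := m_P ∘ (id ⊗ f) ∘ Δ_P` is a
left `B`-module bijection with `F_f(1) = 1`, `(F_f ⊗ id)∘Δ_P = Δ_P∘F_f`, and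
`F_f⁻¹ = F_{f⁻¹}`. -/
theorem Ff_properties
    (ΔP : P →ₗ[ℂ] P ⊗[ℂ] H)
    (hPmul : ∀ x y : P, ΔP (x * y) = ΔP x * ΔP y) (hPone : ΔP 1 = 1)
    (hcounit : ∀ x : P,
      (TensorProduct.rid ℂ P)
        ((TensorProduct.map LinearMap.id (Coalgebra.counit (R := ℂ))) (ΔP x)) = x)
    (hcoassoc : ∀ x : P,
      (TensorProduct.assoc ℂ P H H)
        ((TensorProduct.map ΔP LinearMap.id) (ΔP x)) =
      (TensorProduct.map LinearMap.id (Coalgebra.comul (R := ℂ))) (ΔP x))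
    -- the Hopf–Galois condition: `β̃ : P ⊗_B P → P ⊗ H` bijective,
    -- with `P ⊗_B P` encoded as `T`
    (T : Type*) [AddCommGroup T] [Module ℂ T]
    (mk : P →ₗ[ℂ] P →ₗ[ℂ] T)
    (hbal : ∀ (x y b : P), ΔP b = b ⊗ₜ[ℂ] 1 → mk (x * b) y = mk x (b * y))
    (hgen : Submodule.span ℂ {t : T | ∃ x y : P, t = mk x y} = ⊤)
    (βt : T →ₗ[ℂ] P ⊗[ℂ] H)
    (hβ : ∀ x y : P, βt (mk x y) = (x ⊗ₜ[ℂ] (1 : H)) * ΔP y)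
    (hbij : Function.Bijective βt)
    -- the convolution-invertible equivariant map `f`, with inverse `finv`
    (f finv : H →ₗ[ℂ] P) (hf1 : f 1 = 1)
    (hequiv : ∀ g : H, (TensorProduct.map f LinearMap.id) (adjointCoaction g) =
      ΔP (f g))
    (hinv₁ : conv f finv = convUnit) (hinv₂ : conv finv f = convUnit) :
    Ff ΔP f 1 = 1 ∧
    (∀ b : P, ΔP b = b ⊗ₜ[ℂ] 1 → ∀ x : P, Ff ΔP f (b * x) = b * Ff ΔP f x) ∧
    Function.Bijective (Ff ΔP f) ∧
    (∀ x : P, (TensorProduct.map (Ff ΔP f) LinearMap.id) (ΔP x) = ΔP (Ff ΔP f x)) ∧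
    (∀ x : P, Ff ΔP f (Ff ΔP finv x) = x ∧ Ff ΔP finv (Ff ΔP f x) = x) := by
  have hequiv' : ∀ g : H,
      (TensorProduct.map finv LinearMap.id) (adjointCoaction g) = ΔP (finv g) :=
    FfAux.equiv_inv ΔP f finv hPmul hPone hequiv hinv₁ hinv₂
  have p2 : ∀ x : P, Ff ΔP finv (Ff ΔP f x) = x := fun x =>
    FfAux.main_inv ΔP hPmul hcounit hcoassoc f finv hequiv hinv₁ x
  have p1 : ∀ x : P, Ff ΔP f (Ff ΔP finv x) = x := fun x =>
    FfAux.main_inv ΔP hPmul hcounit hcoassoc finv f hequiv' hinv₂ x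
  refine ⟨FfAux.Ff_one ΔP f hPone hf1,
    fun b hb x => FfAux.Ff_bmul ΔP f hPmul b hb x,
    Function.bijective_iff_has_inverse.mpr ⟨Ff ΔP finv, p2, p1⟩,
    fun x => FfAux.Ff_equiv ΔP hPmul hcoassoc f hequiv x,
    fun x => ⟨p1 x, p2 x⟩⟩


end
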